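/- Let k be a commutative ring, A a commutative k-algebra, S a k-algebra over A, D ∈ HS^p_k(A;Δ), φ : A[[s]]_Δ → A[[t]]_∇ a substitution map, and r ∈ U^p(S;Δ) a D-element. Then: (a) φ•r is a (φ•D)-element of U^q(S;∇); (b) φ•(r·r') = (φ•r)·(φ^D•r') for every r' ∈ S[[s]]_Δ, and in particular (φ•r)^{-1} = φ^D•(r^{-1}); (c) if E is an A-module and S = End_k(E), then (φ•r)~ ∘ (φ^D)_E = φ_E ∘ r̃ as maps E[[s]]_Δ → E[[t]]_∇. -/

import Mathlib

open scoped Classical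

namespace HS

/-- multi-indices in `ℕ^p` -/
abbrev MIdx (p : ℕ) := Fin p → ℕ

/-- the total weight `|α|` of a multi-index -/
def wt {p : ℕ} (α : MIdx p) : ℕ := ∑ i, α i

/-- a non-empty co-ideal of `ℕ^p` -/
def IsCoideal {p : ℕ} (Δ : Set (MIdx p)) : Prop :=
  Δ.Nonempty ∧ ∀ ⦃α : MIdx p⦄, α ∈ Δ → ∀ ⦃β : MIdx p⦄, β ≤ α → β ∈ Δ

/-- Convolution product of two power series, given by their coefficient families:
this is the multiplication of `R[[s]]_Δ` (in terms of representatives). -/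
def sconv {p : ℕ} {R : Type*} [NonUnitalNonAssocSemiring R] (f g : MIdx p → R) : MIdx p → R :=
  fun α => ∑ β ∈ Finset.Iic α, f β * g (α - β)

/-- Applying a series of linear operators to a series of module elements; for an
operator family `f`, `fapply f` is the induced `k[[s]]_Δ`-linear map `f̃ = ∑ f_β s^β`. -/
def fapply {p : ℕ} {k M N : Type*} [Semiring k] [AddCommMonoid M] [AddCommMonoid N]
    [Module k M] [Module k N] (f : MIdx p → (M →ₗ[k] N)) (m : MIdx p → M) : MIdx p → N :=
  fun α => ∑ β ∈ Finset.Iic α, f β (m (α - β))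

/-- a series of scalars acting on a series of module elements:
the module structure of `M[[s]]_Δ` over `A[[s]]_Δ` (in terms of representatives). -/
def smul' {p : ℕ} {A M : Type*} [Semiring A] [AddCommMonoid M] [Module A M]
    (a : MIdx p → A) (m : MIdx p → M) : MIdx p → M :=
  fun α => ∑ β ∈ Finset.Iic α, a β • m (α - β)

/-- the unit (delta) series `1` -/
def one' {p : ℕ} {R : Type*} [Zero R] [One R] : MIdx p → R :=
  fun α => if α = 0 then 1 else 0

/-- `D` is a `(p,Δ)`-variate Hasse–Schmidt derivation of `A` over `k`:
`D_0 = id` and the Leibniz rule `D_α(xy) = ∑_{β+γ=α} D_β(x) D_γ(y)` for `α ∈ Δ`. -/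
def IsHS (k A : Type*) [CommRing k] [CommRing A] [Algebra k A] {p : ℕ}
    (Δ : Set (MIdx p)) (D : MIdx p → Module.End k A) : Prop :=
  D 0 = 1 ∧ ∀ α ∈ Δ, ∀ x y : A,
    D α (x * y) = ∑ β ∈ Finset.Iic α, D β x * D (α - β) y

/-- A substitution map `φ : A[[s]]_Δ → A[[t]]_∇`, modelled by the family of its
coefficients `C α e = C_e(φ,α)` (the coefficient of `t^e` in `φ(s^α)`):
it is multiplicative on monomials, unital, of order `≥ 1` (so `C α e = 0` for
`|e| < |α|`), kills the classes of monomials `s^α` with `α ∉ Δ`, and is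
normalized to vanish outside `∇`. -/
structure SubstMap (A : Type*) [CommRing A] (p q : ℕ)
    (Δ : Set (MIdx p)) (nab : Set (MIdx q)) where
  C : MIdx p → MIdx q → A
  c_zero : ∀ e ∈ nab, C 0 e = if e = 0 then 1 else 0
  c_mul : ∀ α ∈ Δ, ∀ β ∈ Δ, ∀ e ∈ nab,
    C (α + β) e = ∑ u ∈ Finset.Iic e, C α u * C β (e - u)
  c_ord : ∀ α ∈ Δ, ∀ e ∈ nab, wt e < wt α → C α e = 0
  c_suppL : ∀ α : MIdx p, α ∉ Δ → ∀ e : MIdx q, C α e = 0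
  c_suppR : ∀ (α : MIdx p) (e : MIdx q), e ∉ nab → C α e = 0

variable {A' : Type*} [CommRing A'] {p' q' : ℕ} {Δ' : Set (MIdx p')} {nab' : Set (MIdx q')}

/-- the map `A[[s]]_Δ → A[[t]]_∇` induced by a substitution map -/
def SubstMap.app (φ : SubstMap A' p' q' Δ' nab') (f : MIdx p' → A') : MIdx q' → A' :=
  fun e => ∑ α ∈ Finset.Iic (fun _ => wt e : MIdx p'), φ.C α e * f α

/-- `φ • D` for a series of `k`-linear endomorphisms of `A` -/
def SubstMap.bulletEnd {k : Type*} [CommRing k] [Algebra k A']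
    (φ : SubstMap A' p' q' Δ' nab') (D : MIdx p' → Module.End k A') :
    MIdx q' → Module.End k A' :=
  fun e => ∑ α ∈ Finset.Iic (fun _ => wt e : MIdx p'), φ.C α e • D α

/-- `φ • r` for a series with coefficients in a `k`-algebra `S` over `A`
(with structural map `ι : A → S`) -/
def SubstMap.bulletS {S : Type*} [Ring S] (ι : A' → S)
    (φ : SubstMap A' p' q' Δ' nab') (r : MIdx p' → S) : MIdx q' → S :=
  fun e => ∑ α ∈ Finset.Iic (fun _ => wt e : MIdx p'), ι (φ.C α e) * r α

/-- `r • φ` for a series with coefficients in a `k`-algebra `S` over `A` -/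
def SubstMap.bulletSR {S : Type*} [Ring S] (ι : A' → S)
    (φ : SubstMap A' p' q' Δ' nab') (r : MIdx p' → S) : MIdx q' → S :=
  fun e => ∑ α ∈ Finset.Iic (fun _ => wt e : MIdx p'), r α * ι (φ.C α e)

/-- `φ • m` for a series with coefficients in an `A`-module `M` -/
def SubstMap.bulletM {M : Type*} [AddCommMonoid M] [Module A' M]
    (φ : SubstMap A' p' q' Δ' nab') (m : MIdx p' → M) : MIdx q' → M :=
  fun e => ∑ α ∈ Finset.Iic (fun _ => wt e : MIdx p'), φ.C α e • m α

/-- `φ` has constant coefficients, i.e. all the `C_e(φ,α)` come from `k` -/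
def SubstMap.HasConstCoeffs (k : Type*) [CommRing k] [Algebra k A']
    (φ : SubstMap A' p' q' Δ' nab') : Prop :=
  ∀ (α : MIdx p') (e : MIdx q'), φ.C α e ∈ Set.range (algebraMap k A')

/-- `φ • r` for a series of `k`-linear endomorphisms of an `A`-module `M` -/
def SubstMap.bulletEndM {M : Type*} [AddCommGroup M] [Module A' M]
    {k : Type*} [CommRing k] [Algebra k A'] [Module k M] [IsScalarTower k A' M]
    (φ : SubstMap A' p' q' Δ' nab') (r : MIdx p' → Module.End k M) :
    MIdx q' → Module.End k M :=
  fun e => ∑ α ∈ Finset.Iic (fun _ => wt e : MIdx p'), φ.C α e • r α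


/-! ### Auxiliary lemmas -/

section Aux

variable {p q : ℕ}

lemma coord_le_wt (α : MIdx p) (i : Fin p) : α i ≤ wt α :=
  Finset.single_le_sum (fun j _ => Nat.zero_le (α j)) (Finset.mem_univ i)

lemma wt_mono {α β : MIdx p} (h : α ≤ β) : wt α ≤ wt β :=
  Finset.sum_le_sum fun i _ => h i

lemma wt_strict_mono {α β : MIdx p} (h : α ≤ β) (hne : α ≠ β) : wt α < wt β := by
  obtain ⟨i, hi⟩ : ∃ i, α i ≠ β i := by
    by_contra hc; push_neg at hc; exact hne (funext hc)
  exact Finset.sum_lt_sum (fun j _ => h j) ⟨i, Finset.mem_univ i, lt_of_le_of_ne (h i) hi⟩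

lemma zero_mem_coideal {Δ : Set (MIdx p)} (hΔ : IsCoideal Δ) : 0 ∈ Δ := by
  obtain ⟨x, hx⟩ := hΔ.1
  exact hΔ.2 hx (zero_le)

lemma mem_coideal_of_le {Δ : Set (MIdx p)} (hΔ : IsCoideal Δ) {α β : MIdx p}
    (hα : α ∈ Δ) (h : β ≤ α) : β ∈ Δ := hΔ.2 hα h

lemma not_mem_coideal_of_le {Δ : Set (MIdx p)} (hΔ : IsCoideal Δ) {α β : MIdx p}
    (hα : α ∉ Δ) (h : α ≤ β) : β ∉ Δ := fun hβ => hα (hΔ.2 hβ h)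

/-- reflection `β ↦ α - β` on `Iic α` -/
lemma sum_Iic_reflect {M : Type*} [AddCommMonoid M] (α : MIdx p) (G : MIdx p → M) :
    ∑ β ∈ Finset.Iic α, G β = ∑ β ∈ Finset.Iic α, G (α - β) := by
  apply Finset.sum_nbij' (fun β => α - β) (fun β => α - β)
  · intro a ha; exact Finset.mem_Iic.2 (tsub_le_self)
  · intro a ha; exact Finset.mem_Iic.2 (tsub_le_self)
  · intro a ha; exact tsub_tsub_cancel_of_le (Finset.mem_Iic.1 ha)
  · intro a ha; exact tsub_tsub_cancel_of_le (Finset.mem_Iic.1 ha)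
  · intro a ha; rw [tsub_tsub_cancel_of_le (Finset.mem_Iic.1 ha)]

/-- the pair reindexing `(u, v ≤ u) ↔ (v, w ≤ e - v)`, `w = u - v` -/
lemma sum_Iic_pairs {M : Type*} [AddCommMonoid M] (e : MIdx p) (F : MIdx p → MIdx p → M) :
    ∑ u ∈ Finset.Iic e, ∑ v ∈ Finset.Iic u, F v (u - v)
      = ∑ v ∈ Finset.Iic e, ∑ w ∈ Finset.Iic (e - v), F v w := by
  rw [Finset.sum_sigma', Finset.sum_sigma']
  apply Finset.sum_nbij' (fun x => ⟨x.2, x.1 - x.2⟩) (fun x => ⟨x.1 + x.2, x.1⟩)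
  · rintro ⟨u, v⟩ h
    simp only [Finset.mem_sigma, Finset.mem_Iic] at h ⊢
    exact ⟨le_trans h.2 h.1, tsub_le_tsub_right h.1 _⟩
  · rintro ⟨v, w⟩ h
    simp only [Finset.mem_sigma, Finset.mem_Iic] at h ⊢
    constructor
    · calc v + w ≤ v + (e - v) := by gcongr; exact h.2
        _ = e := add_tsub_cancel_of_le h.1
    · exact le_add_right le_rfl
  · rintro ⟨u, v⟩ h
    simp only [Finset.mem_sigma, Finset.mem_Iic] at h
    simp [add_tsub_cancel_of_le h.2]
  · rintro ⟨v, w⟩ h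
    simp [add_tsub_cancel_left]
  · rintro ⟨u, v⟩ h; rfl

lemma sum_Iic_swap {M : Type*} [AddCommMonoid M] (e : MIdx p) (F : MIdx p → MIdx p → M) :
    ∑ v ∈ Finset.Iic e, ∑ w ∈ Finset.Iic (e - v), F v w
      = ∑ w ∈ Finset.Iic e, ∑ v ∈ Finset.Iic (e - w), F v w := by
  rw [← sum_Iic_pairs e F, ← sum_Iic_pairs e (fun w v => F v w)]
  apply Finset.sum_congr rfl; intro u hu
  rw [sum_Iic_reflect u (fun v => F v (u - v))]
  apply Finset.sum_congr rfl; intro v hv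
  rw [tsub_tsub_cancel_of_le (Finset.mem_Iic.1 hv)]

/-- extending / truncating a sum over a box `Iic (N,…,N)` when terms of weight `> N₀` vanish -/
lemma sum_extend {M : Type*} [AddCommMonoid M] {N₀ N : ℕ} (h : N₀ ≤ N) (G : MIdx p → M)
    (hG : ∀ β : MIdx p, N₀ < wt β → G β = 0) :
    ∑ β ∈ Finset.Iic (fun _ => N : MIdx p), G β
      = ∑ β ∈ Finset.Iic (fun _ => N₀ : MIdx p), G β := by
  symm
  apply Finset.sum_subset
  · intro β hβ
    exact Finset.mem_Iic.2 (le_trans (Finset.mem_Iic.1 hβ) (fun i => h))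
  · intro β hβ hβ'
    apply hG
    obtain ⟨i, hi⟩ : ∃ i, N₀ < β i := by
      by_contra hc; push_neg at hc
      exact hβ' (Finset.mem_Iic.2 fun i => hc i)
    exact lt_of_lt_of_le hi (coord_le_wt β i)

lemma sum_Iic_delta_top {M : Type*} [AddCommMonoid M] (α : MIdx p) (G : MIdx p → M) :
    ∑ β ∈ Finset.Iic α, (if α - β = 0 then G β else 0) = G α := by
  rw [Finset.sum_eq_single_of_mem α (Finset.mem_Iic.2 le_rfl)]
  · simp
  · intro β hβ hne
    rw [if_neg]
    intro h0
    exact hne (le_antisymm (Finset.mem_Iic.1 hβ) (tsub_eq_zero_iff_le.1 h0))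

lemma sum_Iic_zero {M : Type*} [AddCommMonoid M] (G : MIdx p → M) :
    ∑ β ∈ Finset.Iic (0 : MIdx p), G β = G 0 := by
  rw [Finset.sum_eq_single_of_mem 0 (Finset.mem_Iic.2 le_rfl)]
  intro β hβ hne
  exact absurd (le_antisymm (Finset.mem_Iic.1 hβ) (zero_le)) hne

end Aux

section Aux2

variable {A : Type*} [CommRing A] {p q : ℕ} {Δ : Set (MIdx p)} {nab : Set (MIdx q)}

lemma SubstMap.C_vanish (φ : SubstMap A p q Δ nab) {α : MIdx p} {e : MIdx q}
    (he : e ∈ nab) (h : wt e < wt α) : φ.C α e = 0 := by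
  by_cases hα : α ∈ Δ
  · exact φ.c_ord α hα e he h
  · exact φ.c_suppL α hα e

/-- the key vanishing used for extending ranges: if `β` escapes the box `Iic (N₀,…,N₀)`
with `wt e ≤ N₀`, then … -/
lemma SubstMap.C_vanish' (φ : SubstMap A p q Δ nab) {α : MIdx p} {e : MIdx q}
    (he : e ∈ nab) (h : wt e < wt α) : ∀ x : A, φ.C α e * x = 0 := fun x => by
  rw [φ.C_vanish he h, zero_mul]

/-- `D_δ(1) = 0` for `δ ≠ 0` -/
lemma IsHS.map_one {k : Type*} [CommRing k] [Algebra k A]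
    {D : MIdx p → Module.End k A} (hΔ : IsCoideal Δ) (hD : IsHS k A Δ D) :
    ∀ δ ∈ Δ, D δ (1 : A) = one' δ := by
  suffices H : ∀ n : ℕ, ∀ δ ∈ Δ, wt δ = n → D δ (1 : A) = one' δ by
    intro δ hδ; exact H (wt δ) δ hδ rfl
  intro n
  induction n using Nat.strong_induction_on with
  | _ n ih =>
    intro δ hδ hwt
    by_cases h0 : δ = 0
    · subst h0; simp [one', hD.1]
    · have key := hD.2 δ hδ 1 1
      rw [mul_one] at key
      have hδs : δ ∈ Finset.Iic δ := Finset.mem_Iic.2 le_rfl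
      rw [← Finset.sum_erase_add _ _ hδs] at key
      have h0s : (0 : MIdx p) ∈ (Finset.Iic δ).erase δ :=
        Finset.mem_erase.2 ⟨fun h => h0 h.symm, Finset.mem_Iic.2 (zero_le)⟩
      rw [← Finset.sum_erase_add _ _ h0s] at key
      have hz : ∑ ε ∈ ((Finset.Iic δ).erase δ).erase 0, D ε (1:A) * D (δ - ε) (1:A) = 0 := by
        apply Finset.sum_eq_zero
        intro ε hε
        have hε0 : ε ≠ 0 := (Finset.mem_erase.1 hε).1
        have hεδ : ε ≠ δ := (Finset.mem_erase.1 (Finset.mem_erase.1 hε).2).1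
        have hεle : ε ≤ δ := Finset.mem_Iic.1 (Finset.mem_erase.1 (Finset.mem_erase.1 hε).2).2
        have : D ε (1:A) = one' ε :=
          ih (wt ε) (hwt ▸ wt_strict_mono hεle hεδ) ε (mem_coideal_of_le hΔ hδ hεle) rfl
        rw [this, one', if_neg hε0, zero_mul]
      rw [hz, zero_add, tsub_self, tsub_zero, hD.1] at key
      simp only [Module.End.one_apply, one_mul, mul_one] at key
      have : D δ (1:A) = 0 := by
        nth_rewrite 1 [← add_zero ((D δ) (1:A))] at key
        exact (add_left_cancel key).symm
      rw [this, one', if_neg h0]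
end Aux2

section Conv

variable {q : ℕ} {S : Type*} [Ring S] {nab : Set (MIdx q)}

lemma sconv_assoc (a b c : MIdx q → S) (e : MIdx q) :
    sconv (sconv a b) c e = sconv a (sconv b c) e := by
  unfold sconv
  simp only [Finset.sum_mul]
  have : ∀ u ∈ Finset.Iic e, ∀ v ∈ Finset.Iic u,
      a v * b (u - v) * c (e - u)
        = (fun γ w => a γ * (b w * c ((e - γ) - w))) v (u - v) := by
    intro u hu v hv
    have h1 : (e - v) - (u - v) = e - u := by
      rw [tsub_tsub, add_tsub_cancel_of_le (Finset.mem_Iic.1 hv)]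
    dsimp only
    rw [h1, mul_assoc]
  rw [Finset.sum_congr rfl (fun u hu => Finset.sum_congr rfl (this u hu)),
    sum_Iic_pairs e (fun γ w => a γ * (b w * c ((e - γ) - w)))]
  exact Finset.sum_congr rfl fun v _ => (Finset.mul_sum _ _ _).symm

lemma sconv_one_left (a : MIdx q → S) (e : MIdx q) :
    sconv one' a e = a e := by
  unfold sconv one'
  rw [Finset.sum_eq_single_of_mem 0 (Finset.mem_Iic.2 (zero_le))]
  · simp
  · intro β hβ hne; simp [hne]

lemma sconv_one_right (a : MIdx q → S) (e : MIdx q) :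
    sconv a one' e = a e := by
  unfold sconv one'
  have : ∀ β ∈ Finset.Iic e, a β * (if e - β = 0 then (1:S) else 0)
      = if e - β = 0 then a β else 0 := by
    intro β _; split <;> simp
  rw [Finset.sum_congr rfl this, sum_Iic_delta_top]

/-- recursively defined left inverse for convolution -/
noncomputable def linv (P : MIdx q → S) : MIdx q → S := fun e =>
  one' e - ∑ β ∈ ((Finset.Iic e).erase e).attach,
    linv P β.1 * P (e - β.1)
termination_by e => wt e
decreasing_by
  exact wt_strict_mono (Finset.mem_Iic.1 (Finset.mem_erase.1 β.2).2)
    (Finset.mem_erase.1 β.2).1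

lemma linv_spec (P : MIdx q → S) (hP0 : P 0 = 1) (e : MIdx q) :
    sconv (linv P) P e = one' e := by
  unfold sconv
  have he : e ∈ Finset.Iic e := Finset.mem_Iic.2 le_rfl
  rw [← Finset.sum_erase_add _ _ he, tsub_self, hP0, mul_one]
  have hdef : linv P e = one' e - ∑ β ∈ ((Finset.Iic e).erase e).attach,
      linv P β.1 * P (e - β.1) := by rw [linv]
  rw [hdef, Finset.sum_attach ((Finset.Iic e).erase e) (fun β => linv P β * P (e - β))]
  abel

lemma left_inv_of_right_inv (hnab : IsCoideal nab) (P Q : MIdx q → S) (hP0 : P 0 = 1)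
    (h : ∀ e ∈ nab, sconv P Q e = one' e) :
    ∀ e ∈ nab, sconv Q P e = one' e := by
  have hQR : ∀ e ∈ nab, Q e = linv P e := by
    intro e he
    have h1 : sconv (sconv (linv P) P) Q e = Q e := by
      have : ∀ β ∈ Finset.Iic e, sconv (linv P) P β * Q (e - β) = one' β * Q (e - β) := by
        intro β _; rw [linv_spec P hP0]
      unfold sconv at this ⊢
      rw [Finset.sum_congr rfl this]
      exact sconv_one_left Q e
    have h2 : sconv (linv P) (sconv P Q) e = linv P e := by
      have : ∀ β ∈ Finset.Iic e, linv P β * sconv P Q (e - β) = linv P β * one' (e - β) := by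
        intro β hβ
        rw [h (e - β) (mem_coideal_of_le hnab he tsub_le_self)]
      unfold sconv at this ⊢
      rw [Finset.sum_congr rfl this]
      exact sconv_one_right (linv P) e
    rw [← h1, sconv_assoc, h2]
  intro e he
  have : ∀ β ∈ Finset.Iic e, Q β * P (e - β) = linv P β * P (e - β) := by
    intro β hβ
    rw [hQR β (mem_coideal_of_le hnab he (Finset.mem_Iic.1 hβ))]
  unfold sconv
  rw [Finset.sum_congr rfl this]
  exact linv_spec P hP0 e

end Conv

section Aux3

variable {p : ℕ}

lemma sum_box {M : Type*} [AddCommMonoid M] {b B : MIdx p} (h : b ≤ B) (G : MIdx p → M)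
    (hG : ∀ β, β ≤ B → ¬ β ≤ b → G β = 0) :
    ∑ β ∈ Finset.Iic B, G β = ∑ β ∈ Finset.Iic b, G β := by
  symm
  apply Finset.sum_subset
  · intro β hβ; exact Finset.mem_Iic.2 (le_trans (Finset.mem_Iic.1 hβ) h)
  · intro β hβ hβ'
    exact hG β (Finset.mem_Iic.1 hβ) (fun hc => hβ' (Finset.mem_Iic.2 hc))

lemma wt_gt_of_escape {N : ℕ} {β : MIdx p} (h : ¬ β ≤ (fun _ => N : MIdx p)) : N < wt β := by
  obtain ⟨i, hi⟩ : ∃ i, N < β i := by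
    by_contra hc; push_neg at hc; exact h (fun i => hc i)
  exact lt_of_lt_of_le hi (coord_le_wt β i)

lemma wt_add_gt {N : ℕ} {δ w : MIdx p} (hδ : δ ≤ (fun _ => N : MIdx p))
    (hw : ¬ w ≤ (fun _ => N : MIdx p) - δ) : N < wt (δ + w) := by
  obtain ⟨i, hi⟩ : ∃ i, N - δ i < w i := by
    by_contra hc; push_neg at hc; exact hw (fun i => hc i)
  have h1 : N < δ i + w i := by have := hδ i; simp only at this hi; omega
  exact lt_of_lt_of_le h1 (coord_le_wt (δ + w) i)

end Aux3

section Main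

variable {k A : Type*} [CommRing k] [CommRing A] [Algebra k A]
  {p q : ℕ} {Δ : Set (MIdx p)} {nab : Set (MIdx q)}
  {S : Type*} [Ring S]

lemma iota_comm (ι : A →+* S) (a b : A) : ι a * ι b = ι b * ι a := by
  rw [← map_mul, mul_comm, map_mul]

lemma iota_shuffle (ι : A →+* S) (a b c' : A) (d : S) :
    ι (a * b) * (ι c' * d) = (ι a * ι c') * (ι b * d) := by
  rw [map_mul, mul_assoc, ← mul_assoc (ι b), iota_comm ι b c', mul_assoc, ← mul_assoc]

/-- `(φ•r)·ι(c) = ι((φ•D)(c)) · (φ•r)` coefficientwise, for a `D`-element `r` -/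
lemma rconst (hΔ : IsCoideal Δ) (hnab : IsCoideal nab)
    (φ : SubstMap A p q Δ nab) (D : MIdx p → Module.End k A)
    (ι : A →+* S) (r : MIdx p → S)
    (hstar : ∀ (c : A), ∀ α ∈ Δ, r α * ι c = ∑ δ ∈ Finset.Iic α, ι (D δ c) * r (α - δ))
    (u : MIdx q) (hu : u ∈ nab) (c : A) :
    φ.bulletS ι r u * ι c
      = ∑ v ∈ Finset.Iic u, ι ((φ.bulletEnd D v) c) * φ.bulletS ι r (u - v) := by
  set U : MIdx p := (fun _ => wt u) with hU
  have key : ∀ v, v ∈ Finset.Iic u → ∀ δ w : MIdx p, δ ∈ Δ → w ∈ Δ → True := fun _ _ _ _ _ _ => trivial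
  -- middle expression
  have hLHS : φ.bulletS ι r u * ι c
      = ∑ δ ∈ Finset.Iic U, ∑ w ∈ Finset.Iic U, ι (φ.C (δ + w) u) * (ι (D δ c) * r w) := by
    unfold SubstMap.bulletS
    rw [Finset.sum_mul]
    have step2 : ∀ α ∈ Finset.Iic U, (ι (φ.C α u) * r α) * ι c
        = ∑ δ ∈ Finset.Iic α, (fun δ w => ι (φ.C (δ + w) u) * (ι (D δ c) * r w)) δ (α - δ) := by
      intro α hα
      by_cases hαΔ : α ∈ Δ
      · rw [mul_assoc, hstar c α hαΔ, Finset.mul_sum]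
        apply Finset.sum_congr rfl
        intro δ hδ
        dsimp only
        rw [add_tsub_cancel_of_le (Finset.mem_Iic.1 hδ)]
      · simp only [φ.c_suppL α hαΔ, map_zero, zero_mul]
        symm
        apply Finset.sum_eq_zero
        intro δ hδ
        have : δ + (α - δ) = α := add_tsub_cancel_of_le (Finset.mem_Iic.1 hδ)
        rw [this, φ.c_suppL α hαΔ, map_zero, zero_mul]
    rw [Finset.sum_congr rfl step2,
      sum_Iic_pairs U (fun δ w => ι (φ.C (δ + w) u) * (ι (D δ c) * r w))]
    apply Finset.sum_congr rfl
    intro δ hδ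
    symm
    apply sum_box tsub_le_self
    intro w hwB hwb
    rw [φ.C_vanish hu (wt_add_gt (Finset.mem_Iic.1 hδ) hwb), map_zero, zero_mul]
  rw [hLHS]
  -- now the right-hand side
  have stepv : ∀ v ∈ Finset.Iic u, ι ((φ.bulletEnd D v) c) * φ.bulletS ι r (u - v)
      = ∑ δ ∈ Finset.Iic U, ∑ w ∈ Finset.Iic U,
          (ι (φ.C δ v) * ι (φ.C w (u - v))) * (ι (D δ c) * r w) := by
    intro v hv
    have hvle : v ≤ u := Finset.mem_Iic.1 hv
    have hvnab : v ∈ nab := mem_coideal_of_le hnab hu hvle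
    have huv : u - v ∈ nab := mem_coideal_of_le hnab hu tsub_le_self
    unfold SubstMap.bulletEnd SubstMap.bulletS
    rw [LinearMap.sum_apply, map_sum]
    have hext1 : ∑ δ ∈ Finset.Iic (fun _ => wt v : MIdx p), ι ((φ.C δ v • D δ) c)
        = ∑ δ ∈ Finset.Iic U, ι ((φ.C δ v • D δ) c) := by
      symm
      apply sum_box (fun i => wt_mono hvle)
      intro δ _ hδb
      rw [LinearMap.smul_apply, smul_eq_mul, φ.C_vanish hvnab (wt_gt_of_escape hδb),
        zero_mul, map_zero]
    have hext2 : ∑ w ∈ Finset.Iic (fun _ => wt (u - v) : MIdx p), ι (φ.C w (u - v)) * r w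
        = ∑ w ∈ Finset.Iic U, ι (φ.C w (u - v)) * r w := by
      symm
      apply sum_box (fun i => wt_mono tsub_le_self)
      intro w _ hwb
      rw [φ.C_vanish huv (wt_gt_of_escape hwb), map_zero, zero_mul]
    rw [hext1, hext2, Finset.sum_mul]
    apply Finset.sum_congr rfl
    intro δ hδ
    rw [Finset.mul_sum]
    apply Finset.sum_congr rfl
    intro w hw
    rw [LinearMap.smul_apply, smul_eq_mul, iota_shuffle]
  rw [Finset.sum_congr rfl stepv]
  conv_rhs => rw [Finset.sum_comm]
  apply Finset.sum_congr rfl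
  intro δ hδ
  conv_rhs => rw [Finset.sum_comm]
  apply Finset.sum_congr rfl
  intro w hw
  rw [← Finset.sum_mul]
  congr 1
  by_cases hδΔ : δ ∈ Δ
  · by_cases hwΔ : w ∈ Δ
    · rw [φ.c_mul δ hδΔ w hwΔ u hu, map_sum]
      apply Finset.sum_congr rfl
      intro v _
      rw [map_mul]
    · rw [φ.c_suppL _ (not_mem_coideal_of_le hΔ hwΔ (le_add_left le_rfl)), map_zero]
      symm
      apply Finset.sum_eq_zero
      intro v _
      rw [φ.c_suppL w hwΔ, map_zero, mul_zero]
  · rw [φ.c_suppL _ (not_mem_coideal_of_le hΔ hδΔ (le_add_right le_rfl)), map_zero]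
    symm
    apply Finset.sum_eq_zero
    intro v _
    rw [φ.c_suppL δ hδΔ, map_zero, zero_mul]

/-- specialization of the defining property of `φ^D` to a monomial `s^γ` -/
lemma tick (hΔ : IsCoideal Δ) (hnab : IsCoideal nab)
    (φ φD : SubstMap A p q Δ nab) (D : MIdx p → Module.End k A) (hD : IsHS k A Δ D)
    (hφD : ∀ f : MIdx p → A, ∀ e ∈ nab,
      fapply (φ.bulletEnd D) (φD.app f) e = φ.app (fapply D f) e)
    {γ : MIdx p} (hγ : γ ∈ Δ) {e' : MIdx q} (he' : e' ∈ nab) :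
    ∑ v ∈ Finset.Iic e', (φ.bulletEnd D v) (φD.C γ (e' - v)) = φ.C γ e' := by
  set f : MIdx p → A := fun γ' => if γ' = γ then 1 else 0 with hfdef
  have happ : ∀ e'' ∈ nab, φD.app f e'' = φD.C γ e'' := by
    intro e'' he''
    unfold SubstMap.app
    have : ∀ α ∈ Finset.Iic (fun _ => wt e'' : MIdx p),
        φD.C α e'' * f α = if α = γ then φD.C α e'' else 0 := by
      intro α _
      by_cases hαγ : α = γ
      · rw [if_pos hαγ, hfdef]; simp [hαγ]
      · rw [if_neg hαγ, hfdef]; simp [hαγ]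
    rw [Finset.sum_congr rfl this, Finset.sum_ite_eq' (Finset.Iic (fun _ => wt e'' : MIdx p)) γ
      (fun α => φD.C α e'')]
    split
    · rfl
    · next hmem =>
        rw [φD.C_vanish he'' (wt_gt_of_escape (fun hc => hmem (Finset.mem_Iic.2 hc)))]
  have hL : fapply (φ.bulletEnd D) (φD.app f) e'
      = ∑ v ∈ Finset.Iic e', (φ.bulletEnd D v) (φD.C γ (e' - v)) := by
    unfold fapply
    apply Finset.sum_congr rfl
    intro v _
    rw [happ (e' - v) (mem_coideal_of_le hnab he' tsub_le_self)]
  have hR : φ.app (fapply D f) e' = φ.C γ e' := by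
    unfold SubstMap.app
    have : ∀ α ∈ Finset.Iic (fun _ => wt e' : MIdx p),
        φ.C α e' * fapply D f α = if α = γ then φ.C α e' else 0 := by
      intro α _
      by_cases hαΔ : α ∈ Δ
      · by_cases hγα : γ ≤ α
        · have hf : fapply D f α = D (α - γ) (1 : A) := by
            unfold fapply
            rw [Finset.sum_eq_single_of_mem (α - γ) (Finset.mem_Iic.2 tsub_le_self)]
            · rw [tsub_tsub_cancel_of_le hγα, hfdef]; simp
            · intro δ hδ hne
              have hz : f (α - δ) = 0 := by
                rw [hfdef]
                dsimp only
                rw [if_neg]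
                intro hc
                exact hne (by rw [← hc, tsub_tsub_cancel_of_le (Finset.mem_Iic.1 hδ)])
              rw [hz, map_zero]
          rw [hf, IsHS.map_one hΔ hD (α - γ) (mem_coideal_of_le hΔ hαΔ tsub_le_self)]
          unfold one'
          by_cases hαγ : α = γ
          · rw [if_pos hαγ, if_pos (by rw [hαγ, tsub_self]), mul_one]
          · rw [if_neg hαγ, if_neg, mul_zero]
            intro h0
            exact hαγ (le_antisymm (tsub_eq_zero_iff_le.1 h0) hγα)
        · have hf : fapply D f α = 0 := by
            unfold fapply
            apply Finset.sum_eq_zero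
            intro δ _
            have hz : f (α - δ) = 0 := by
              rw [hfdef]
              dsimp only
              rw [if_neg]
              intro hc
              exact hγα (le_of_eq_of_le hc.symm tsub_le_self)
            rw [hz, map_zero]
          rw [hf, mul_zero, if_neg (fun (h : α = γ) => hγα h.ge)]
      · rw [φ.c_suppL α hαΔ, zero_mul, if_neg (fun (h : α = γ) => hαΔ (h.symm ▸ hγ))]
    rw [Finset.sum_congr rfl this, Finset.sum_ite_eq' (Finset.Iic (fun _ => wt e' : MIdx p)) γ
      (fun α => φ.C α e')]
    split
    · rfl
    · next hmem =>
        rw [φ.C_vanish he' (wt_gt_of_escape (fun hc => hmem (Finset.mem_Iic.2 hc)))]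
  rw [← hL, hφD f e' he', hR]

/-- the key identity `φ•(r·s^γ) = (φ•r)·φ^D(s^γ)` coefficientwise -/
lemma dagger (hΔ : IsCoideal Δ) (hnab : IsCoideal nab)
    (φ φD : SubstMap A p q Δ nab) (D : MIdx p → Module.End k A) (hD : IsHS k A Δ D)
    (hφD : ∀ f : MIdx p → A, ∀ e ∈ nab,
      fapply (φ.bulletEnd D) (φD.app f) e = φ.app (fapply D f) e)
    (ι : A →+* S) (r : MIdx p → S)
    (hstar : ∀ (c : A), ∀ α ∈ Δ, r α * ι c = ∑ δ ∈ Finset.Iic α, ι (D δ c) * r (α - δ))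
    (γ : MIdx p) (e : MIdx q) (he : e ∈ nab) :
    ∑ β ∈ Finset.Iic (fun _ => wt e : MIdx p), ι (φ.C (β + γ) e) * r β
      = ∑ u ∈ Finset.Iic e, φ.bulletS ι r u * ι (φD.C γ (e - u)) := by
  by_cases hγ : γ ∈ Δ
  · symm
    have step1 : ∀ u ∈ Finset.Iic e, φ.bulletS ι r u * ι (φD.C γ (e - u))
        = ∑ v ∈ Finset.Iic u,
            (fun v w => ι ((φ.bulletEnd D v) (φD.C γ ((e - w) - v))) * φ.bulletS ι r w) v (u - v) := by
      intro u hu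
      rw [rconst hΔ hnab φ D ι r hstar u (mem_coideal_of_le hnab he (Finset.mem_Iic.1 hu))
        (φD.C γ (e - u))]
      apply Finset.sum_congr rfl
      intro v hv
      dsimp only
      congr 2
      rw [tsub_tsub, tsub_add_cancel_of_le (Finset.mem_Iic.1 hv)]
    rw [Finset.sum_congr rfl step1,
      sum_Iic_pairs e (fun v w => ι ((φ.bulletEnd D v) (φD.C γ ((e - w) - v))) * φ.bulletS ι r w),
      sum_Iic_swap e (fun v w => ι ((φ.bulletEnd D v) (φD.C γ ((e - w) - v))) * φ.bulletS ι r w)]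
    have step2 : ∀ w ∈ Finset.Iic e,
        ∑ v ∈ Finset.Iic (e - w), ι ((φ.bulletEnd D v) (φD.C γ ((e - w) - v))) * φ.bulletS ι r w
          = ∑ β ∈ Finset.Iic (fun _ => wt e : MIdx p), ι (φ.C γ (e - w)) * (ι (φ.C β w) * r β) := by
      intro w hw
      have hwnab : w ∈ nab := mem_coideal_of_le hnab he (Finset.mem_Iic.1 hw)
      rw [← Finset.sum_mul, ← map_sum ι,
        tick hΔ hnab φ φD D hD hφD hγ (mem_coideal_of_le hnab he tsub_le_self)]
      unfold SubstMap.bulletS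
      have hext : ∑ β ∈ Finset.Iic (fun _ => wt e : MIdx p), ι (φ.C β w) * r β
          = ∑ β ∈ Finset.Iic (fun _ => wt w : MIdx p), ι (φ.C β w) * r β := by
        apply sum_box (fun i => wt_mono (Finset.mem_Iic.1 hw))
        intro β _ hβb
        rw [φ.C_vanish hwnab (wt_gt_of_escape hβb), map_zero, zero_mul]
      rw [← hext, Finset.mul_sum]
    rw [Finset.sum_congr rfl step2, Finset.sum_comm]
    apply Finset.sum_congr rfl
    intro β _
    have : ∀ w ∈ Finset.Iic e, ι (φ.C γ (e - w)) * (ι (φ.C β w) * r β)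
        = ι (φ.C β w * φ.C γ (e - w)) * r β := by
      intro w _
      rw [map_mul, ← mul_assoc, iota_comm ι (φ.C γ (e - w)) (φ.C β w), mul_assoc]
    rw [Finset.sum_congr rfl this, ← Finset.sum_mul, ← map_sum ι]
    congr 2
    by_cases hβΔ : β ∈ Δ
    · exact (φ.c_mul β hβΔ γ hγ e he).symm
    · rw [φ.c_suppL _ (not_mem_coideal_of_le hΔ hβΔ (le_add_right le_rfl))]
      apply Finset.sum_eq_zero
      intro v _
      rw [φ.c_suppL β hβΔ, zero_mul]
  · have hL : ∀ β ∈ Finset.Iic (fun _ => wt e : MIdx p), ι (φ.C (β + γ) e) * r β = 0 := by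
      intro β _
      rw [φ.c_suppL _ (not_mem_coideal_of_le hΔ hγ le_add_self), map_zero, zero_mul]
    have hR : ∀ u ∈ Finset.Iic e, φ.bulletS ι r u * ι (φD.C γ (e - u)) = 0 := by
      intro u _
      rw [φD.c_suppL γ hγ, map_zero, mul_zero]
    rw [Finset.sum_eq_zero hL, Finset.sum_eq_zero hR]

/-- part (a): `φ•r` is a `(φ•D)`-element -/
lemma partA (hΔ : IsCoideal Δ) (hnab : IsCoideal nab)
    (φ : SubstMap A p q Δ nab) (D : MIdx p → Module.End k A)
    (ι : A →+* S) (r : MIdx p → S)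
    (hstar : ∀ (c : A), ∀ α ∈ Δ, r α * ι c = ∑ δ ∈ Finset.Iic α, ι (D δ c) * r (α - δ))
    (a : MIdx q → A) (e : MIdx q) (he : e ∈ nab) :
    sconv (φ.bulletS ι r) (fun γ => ι (a γ)) e
      = sconv (fun γ => ι (fapply (φ.bulletEnd D) a γ)) (φ.bulletS ι r) e := by
  unfold sconv
  have step1 : ∀ u ∈ Finset.Iic e, φ.bulletS ι r u * ι (a (e - u))
      = ∑ v ∈ Finset.Iic u,
          (fun v w => ι ((φ.bulletEnd D v) (a ((e - w) - v))) * φ.bulletS ι r w) v (u - v) := by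
    intro u hu
    rw [rconst hΔ hnab φ D ι r hstar u (mem_coideal_of_le hnab he (Finset.mem_Iic.1 hu))
      (a (e - u))]
    apply Finset.sum_congr rfl
    intro v hv
    dsimp only
    congr 2
    rw [tsub_tsub, tsub_add_cancel_of_le (Finset.mem_Iic.1 hv)]
  rw [Finset.sum_congr rfl step1,
    sum_Iic_pairs e (fun v w => ι ((φ.bulletEnd D v) (a ((e - w) - v))) * φ.bulletS ι r w),
    sum_Iic_swap e (fun v w => ι ((φ.bulletEnd D v) (a ((e - w) - v))) * φ.bulletS ι r w)]
  have step2 : ∀ w ∈ Finset.Iic e,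
      ∑ v ∈ Finset.Iic (e - w), ι ((φ.bulletEnd D v) (a ((e - w) - v))) * φ.bulletS ι r w
        = ι (fapply (φ.bulletEnd D) a (e - w)) * φ.bulletS ι r w := by
    intro w _
    rw [← Finset.sum_mul, ← map_sum ι]
    rfl
  rw [Finset.sum_congr rfl step2, sum_Iic_reflect e
    (fun β => ι (fapply (φ.bulletEnd D) a (e - β)) * φ.bulletS ι r β)]
  apply Finset.sum_congr rfl
  intro β hβ
  rw [tsub_tsub_cancel_of_le (Finset.mem_Iic.1 hβ)]

set_option maxHeartbeats 1000000 in
/-- part (b): `φ•(r·r') = (φ•r)·(φ^D•r')` -/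
lemma partB (hΔ : IsCoideal Δ) (hnab : IsCoideal nab)
    (φ φD : SubstMap A p q Δ nab) (D : MIdx p → Module.End k A) (hD : IsHS k A Δ D)
    (hφD : ∀ f : MIdx p → A, ∀ e ∈ nab,
      fapply (φ.bulletEnd D) (φD.app f) e = φ.app (fapply D f) e)
    (ι : A →+* S) (r : MIdx p → S)
    (hstar : ∀ (c : A), ∀ α ∈ Δ, r α * ι c = ∑ δ ∈ Finset.Iic α, ι (D δ c) * r (α - δ))
    (r' : MIdx p → S) (e : MIdx q) (he : e ∈ nab) :
    φ.bulletS ι (sconv r r') e = sconv (φ.bulletS ι r) (φD.bulletS ι r') e := by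
  set E : MIdx p := (fun _ => wt e) with hE
  show (∑ α ∈ Finset.Iic E, ι (φ.C α e) * sconv r r' α)
      = ∑ u ∈ Finset.Iic e, φ.bulletS ι r u * φD.bulletS ι r' (e - u)
  have step1 : ∀ α ∈ Finset.Iic E, ι (φ.C α e) * sconv r r' α
      = ∑ β ∈ Finset.Iic α, (fun β w => ι (φ.C (β + w) e) * (r β * r' w)) β (α - β) := by
    intro α hα
    unfold sconv
    rw [Finset.mul_sum]
    apply Finset.sum_congr rfl
    intro β hβ
    dsimp only
    rw [add_tsub_cancel_of_le (Finset.mem_Iic.1 hβ)]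
  rw [Finset.sum_congr rfl step1,
    sum_Iic_pairs E (fun β w => ι (φ.C (β + w) e) * (r β * r' w))]
  have step2 : ∀ β ∈ Finset.Iic E,
      ∑ w ∈ Finset.Iic (E - β), ι (φ.C (β + w) e) * (r β * r' w)
        = ∑ w ∈ Finset.Iic E, ι (φ.C (β + w) e) * (r β * r' w) := by
    intro β hβ
    symm
    apply sum_box tsub_le_self
    intro w _ hwb
    rw [φ.C_vanish he (wt_add_gt (Finset.mem_Iic.1 hβ) hwb), map_zero, zero_mul]
  rw [Finset.sum_congr rfl step2, Finset.sum_comm]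
  have step3 : ∀ w ∈ Finset.Iic E,
      ∑ β ∈ Finset.Iic E, ι (φ.C (β + w) e) * (r β * r' w)
        = ∑ u ∈ Finset.Iic e, φ.bulletS ι r u * (ι (φD.C w (e - u)) * r' w) := by
    intro w _
    have h1 : ∑ β ∈ Finset.Iic E, ι (φ.C (β + w) e) * (r β * r' w)
        = (∑ β ∈ Finset.Iic E, ι (φ.C (β + w) e) * r β) * r' w := by
      rw [Finset.sum_mul]
      exact Finset.sum_congr rfl fun β _ => (mul_assoc _ _ _).symm
    rw [h1, dagger hΔ hnab φ φD D hD hφD ι r hstar w e he, Finset.sum_mul]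
    exact Finset.sum_congr rfl fun u _ => mul_assoc _ _ _
  rw [Finset.sum_congr rfl step3, Finset.sum_comm]
  apply Finset.sum_congr rfl
  intro u hu
  have hext : ∑ w ∈ Finset.Iic E, ι (φD.C w (e - u)) * r' w
      = ∑ w ∈ Finset.Iic (fun _ => wt (e - u) : MIdx p), ι (φD.C w (e - u)) * r' w := by
    apply sum_box (fun i => wt_mono (tsub_le_self : e - u ≤ e))
    intro w _ hwb
    rw [φD.C_vanish (mem_coideal_of_le hnab he tsub_le_self) (wt_gt_of_escape hwb),
      map_zero, zero_mul]
  rw [← Finset.mul_sum, hext]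
  rfl

end Main
/-- Let `S` be a `k`-algebra over `A` (structural map `ι`),
`D ∈ HS^p_k(A;Δ)` with inverse `D*`, `φ : A[[s]]_Δ → A[[t]]_∇` a substitution map,
`φ^D` the substitution map with `(φ•D)~ ∘ φ^D = φ ∘ D̃`, and `r ∈ U^p(S;Δ)` a
`D`-element.  Then (a) `φ•r` is a `(φ•D)`-element; (b) `φ•(r·r') = (φ•r)·(φ^D•r')`
and in particular `(φ•r)⁻¹ = φ^D•(r⁻¹)`; (c) if `E` is an `A`-module and
`S = End_k(E)`, then `(φ•r)~ ∘ (φ^D)_E = φ_E ∘ r̃`. -/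
theorem stmt9 (k A S : Type*) [CommRing k] [CommRing A] [Algebra k A]
    [Ring S] [Algebra k S] (ι : A →ₐ[k] S)
    (p q : ℕ) (Δ : Set (MIdx p)) (nab : Set (MIdx q))
    (hΔ : IsCoideal Δ) (hnab : IsCoideal nab)
    (φ : SubstMap A p q Δ nab)
    (D Ds : MIdx p → Module.End k A)
    (hD : IsHS k A Δ D) (hDs : IsHS k A Δ Ds)
    (hinv₁ : ∀ α ∈ Δ, sconv D Ds α = (one' : MIdx p → Module.End k A) α)
    (hinv₂ : ∀ α ∈ Δ, sconv Ds D α = (one' : MIdx p → Module.End k A) α)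
    (φD : SubstMap A p q Δ nab)
    -- defining property of `φ^D`:  `(φ•D)~ ∘ φ^D = φ ∘ D̃`
    (hφD : ∀ f : MIdx p → A, ∀ e ∈ nab,
      fapply (φ.bulletEnd D) (φD.app f) e = φ.app (fapply D f) e)
    (E : Type*) [AddCommGroup E] [Module k E] [Module A E] [IsScalarTower k A E]
    (r : MIdx p → S) (hr0 : r 0 = 1)
    -- `r` is a `D`-element
    (hrD : ∀ a : MIdx p → A, ∀ α ∈ Δ,
      sconv r (fun γ => ι (a γ)) α = sconv (fun γ => ι (fapply D a γ)) r α) :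
    -- (a)  `φ•r` is a `(φ•D)`-element
    (∀ a : MIdx q → A, ∀ e ∈ nab,
      sconv (φ.bulletS ι r) (fun γ => ι (a γ)) e
        = sconv (fun γ => ι (fapply (φ.bulletEnd D) a γ)) (φ.bulletS ι r) e)
    -- (b)  `φ•(r r') = (φ•r)(φ^D•r')` for every `r' ∈ S[[s]]_Δ`
    ∧ (∀ r' : MIdx p → S, ∀ e ∈ nab,
        φ.bulletS ι (sconv r r') e = sconv (φ.bulletS ι r) (φD.bulletS ι r') e)
    -- (b') in particular, `(φ•r)* = φ^D • r*`
    ∧ (∀ rs : MIdx p → S,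
        (∀ α ∈ Δ, sconv r rs α = (one' : MIdx p → S) α) →
        (∀ α ∈ Δ, sconv rs r α = (one' : MIdx p → S) α) →
        (∀ e ∈ nab, sconv (φ.bulletS ι r) (φD.bulletS ι rs) e = (one' : MIdx q → S) e)
        ∧ (∀ e ∈ nab, sconv (φD.bulletS ι rs) (φ.bulletS ι r) e = (one' : MIdx q → S) e))
    -- (c)  for an `A`-module `E` and `S = End_k(E)`:  `(φ•r)~ ∘ (φ^D)_E = φ_E ∘ r̃`
    ∧ (∀ rE : MIdx p → Module.End k E,
        -- `rE` is a `D`-element of `U^p(End_k(E);Δ)`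
        (∀ (a : MIdx p → A) (m : MIdx p → E), ∀ α ∈ Δ,
          fapply rE (smul' a m) α = smul' (fapply D a) (fapply rE m) α) →
        ∀ m : MIdx p → E, ∀ e ∈ nab,
          fapply (φ.bulletEndM rE) (φD.bulletM m) e = φ.bulletM (fapply rE m) e) := by
  have h0nab : (0 : MIdx q) ∈ nab := zero_mem_coideal hnab
  have h0Δ : (0 : MIdx p) ∈ Δ := zero_mem_coideal hΔ
  -- the `D`-element property for constant series
  have hstar : ∀ (c : A), ∀ α ∈ Δ, r α * ι.toRingHom c
      = ∑ δ ∈ Finset.Iic α, ι.toRingHom (D δ c) * r (α - δ) := by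
    intro c α hα
    have h := hrD (fun γ => if γ = 0 then c else 0) α hα
    have hL : sconv r (fun γ => ι ((fun γ' => if γ' = (0:MIdx p) then c else 0) γ)) α
        = r α * ι c := by
      unfold sconv
      have h1 : ∀ β ∈ Finset.Iic α,
          r β * ι (if α - β = (0:MIdx p) then c else 0)
            = if α - β = 0 then r β * ι c else 0 := by
        intro β _
        split
        · rfl
        · rw [map_zero, mul_zero]
      rw [Finset.sum_congr rfl h1, sum_Iic_delta_top α (fun β => r β * ι c)]
    have hda : ∀ β : MIdx p, fapply D (fun γ' => if γ' = (0:MIdx p) then c else 0) β = D β c := by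
      intro β
      unfold fapply
      have h1 : ∀ δ ∈ Finset.Iic β, D δ (if β - δ = (0:MIdx p) then c else 0)
          = if β - δ = 0 then D δ c else 0 := by
        intro δ _
        split
        · rfl
        · rw [map_zero]
      rw [Finset.sum_congr rfl h1, sum_Iic_delta_top β (fun δ => D δ c)]
    have hR : sconv (fun γ => ι (fapply D (fun γ' => if γ' = (0:MIdx p) then c else 0) γ)) r α
        = ∑ δ ∈ Finset.Iic α, ι (D δ c) * r (α - δ) := by
      unfold sconv
      exact Finset.sum_congr rfl fun δ _ => by dsimp only; rw [hda δ]
    rw [hL, hR] at h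
    exact h
  refine ⟨?_, ?_, ?_, ?_⟩
  · -- (a)
    intro a e he
    exact partA hΔ hnab φ D ι.toRingHom r hstar a e he
  · -- (b)
    intro r' e he
    exact partB hΔ hnab φ φD D hD hφD ι.toRingHom r hstar r' e he
  · -- (b')
    intro rs hrs1 hrs2
    have hP0 : φ.bulletS ι r 0 = 1 := by
      have hw0 : (fun _ => wt (0 : MIdx q) : MIdx p) = 0 := by
        funext i; simp [wt]
      show (∑ α ∈ Finset.Iic (fun _ => wt (0 : MIdx q) : MIdx p), ι (φ.C α 0) * r α) = 1
      rw [hw0, sum_Iic_zero (fun α => ι (φ.C α 0) * r α), φ.c_zero 0 h0nab, if_pos rfl,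
        map_one, one_mul, hr0]
    have hfirst : ∀ e ∈ nab, sconv (φ.bulletS ι r) (φD.bulletS ι rs) e = one' e := by
      intro e he
      refine Eq.trans (partB hΔ hnab φ φD D hD hφD ι.toRingHom r hstar rs e he).symm ?_
      show (∑ α ∈ Finset.Iic (fun _ => wt e : MIdx p), ι (φ.C α e) * sconv r rs α) = one' e
      have h1 : ∀ α ∈ Finset.Iic (fun _ => wt e : MIdx p),
          ι (φ.C α e) * sconv r rs α = if α = 0 then ι (φ.C α e) else 0 := by
        intro α _
        by_cases hαΔ : α ∈ Δ
        · rw [hrs1 α hαΔ]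
          unfold one'
          by_cases hα0 : α = 0
          · rw [if_pos hα0, if_pos hα0, mul_one]
          · rw [if_neg hα0, if_neg hα0, mul_zero]
        · rw [φ.c_suppL α hαΔ, map_zero, zero_mul,
            if_neg (fun (h : α = 0) => hαΔ (h.symm ▸ h0Δ))]
      rw [Finset.sum_congr rfl h1, Finset.sum_ite_eq' _ 0 (fun α => ι (φ.C α e)),
        if_pos (Finset.mem_Iic.2 (zero_le)), φ.c_zero e he]
      by_cases he0 : e = 0 <;> simp [one', he0]
    exact ⟨hfirst, left_inv_of_right_inv hnab _ _ hP0 hfirst⟩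
  · -- (c)
    intro rE hrE m e he
    set ιE : A →ₐ[k] Module.End k E := Algebra.lsmul k k E with hιEdef
    have hstarE : ∀ (c : A), ∀ α ∈ Δ, rE α * ιE.toRingHom c
        = ∑ δ ∈ Finset.Iic α, ιE.toRingHom (D δ c) * rE (α - δ) := by
      intro c α hα
      apply LinearMap.ext
      intro x
      have h := hrE (fun γ => if γ = (0:MIdx p) then c else 0)
        (fun γ => if γ = (0:MIdx p) then x else 0) α hα
      have hsm : smul' (fun γ => if γ = (0:MIdx p) then c else 0)
          (fun γ => if γ = (0:MIdx p) then x else 0)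
          = fun ξ => if ξ = (0:MIdx p) then c • x else 0 := by
        funext ξ
        unfold smul'
        rw [Finset.sum_eq_single_of_mem 0 (Finset.mem_Iic.2 (zero_le))]
        · dsimp only
          rw [if_pos rfl, tsub_zero]
          by_cases hξ : ξ = (0:MIdx p)
          · rw [if_pos hξ, if_pos hξ]
          · rw [if_neg hξ, if_neg hξ, smul_zero]
        · intro β _ hβ0
          dsimp only
          rw [if_neg hβ0, zero_smul]
      rw [hsm] at h
      have hfl : fapply rE (fun ξ => if ξ = (0:MIdx p) then c • x else 0) α = rE α (c • x) := by
        unfold fapply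
        have h1 : ∀ β ∈ Finset.Iic α, rE β (if α - β = (0:MIdx p) then c • x else 0)
            = if α - β = 0 then rE β (c • x) else 0 := by
          intro β _
          split
          · rfl
          · rw [map_zero]
        rw [Finset.sum_congr rfl h1, sum_Iic_delta_top α (fun β => rE β (c • x))]
      have hda : fapply D (fun γ => if γ = (0:MIdx p) then c else 0) = fun β => D β c := by
        funext β
        unfold fapply
        have h1 : ∀ δ ∈ Finset.Iic β, D δ (if β - δ = (0:MIdx p) then c else 0)
            = if β - δ = 0 then D δ c else 0 := by
          intro δ _
          split
          · rfl
          · rw [map_zero]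
        rw [Finset.sum_congr rfl h1, sum_Iic_delta_top β (fun δ => D δ c)]
      have hrm : fapply rE (fun γ => if γ = (0:MIdx p) then x else 0) = fun ξ => rE ξ x := by
        funext ξ
        unfold fapply
        have h1 : ∀ β ∈ Finset.Iic ξ, rE β (if ξ - β = (0:MIdx p) then x else 0)
            = if ξ - β = 0 then rE β x else 0 := by
          intro β _
          split
          · rfl
          · rw [map_zero]
        rw [Finset.sum_congr rfl h1, sum_Iic_delta_top ξ (fun β => rE β x)]
      rw [hfl, hda, hrm] at h
      calc (rE α * ιE.toRingHom c) x = rE α (c • x) := rfl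
        _ = smul' (fun β => D β c) (fun ξ => rE ξ x) α := h
        _ = ∑ δ ∈ Finset.Iic α, (ιE.toRingHom (D δ c) * rE (α - δ)) x := by
            unfold smul'
            exact Finset.sum_congr rfl fun δ _ => rfl
        _ = (∑ δ ∈ Finset.Iic α, ιE.toRingHom (D δ c) * rE (α - δ)) x :=
            (LinearMap.sum_apply _ _ _).symm
    -- now the computation
    set E' : MIdx p := (fun _ => wt e) with hE'
    have hBE : ∀ u, φ.bulletEndM rE u = φ.bulletS ιE.toRingHom rE u := by
      intro u
      show (∑ α ∈ Finset.Iic (fun _ => wt u : MIdx p), φ.C α u • rE α)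
          = ∑ α ∈ Finset.Iic (fun _ => wt u : MIdx p), ιE.toRingHom (φ.C α u) * rE α
      exact Finset.sum_congr rfl fun α _ => LinearMap.ext fun x => rfl
    have hLHS : fapply (φ.bulletEndM rE) (φD.bulletM m) e
        = ∑ γ ∈ Finset.Iic E', ∑ β ∈ Finset.Iic E', φ.C (β + γ) e • rE β (m γ) := by
      show (∑ u ∈ Finset.Iic e, (φ.bulletEndM rE u) (φD.bulletM m (e - u))) = _
      have step1 : ∀ u ∈ Finset.Iic e, (φ.bulletEndM rE u) (φD.bulletM m (e - u))
          = ∑ γ ∈ Finset.Iic E',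
              (φ.bulletS ιE.toRingHom rE u * ιE.toRingHom (φD.C γ (e - u))) (m γ) := by
        intro u hu
        have hext : φD.bulletM m (e - u) = ∑ γ ∈ Finset.Iic E', φD.C γ (e - u) • m γ := by
          show (∑ γ ∈ Finset.Iic (fun _ => wt (e - u) : MIdx p), φD.C γ (e - u) • m γ) = _
          symm
          apply sum_box (fun i => wt_mono (tsub_le_self : e - u ≤ e))
          intro γ _ hγb
          rw [φD.C_vanish (mem_coideal_of_le hnab he tsub_le_self) (wt_gt_of_escape hγb),
            zero_smul]
        rw [hext, map_sum, hBE u]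
        exact Finset.sum_congr rfl fun γ _ => rfl
      rw [Finset.sum_congr rfl step1, Finset.sum_comm]
      apply Finset.sum_congr rfl
      intro γ _
      rw [← LinearMap.sum_apply, ← dagger hΔ hnab φ φD D hD hφD ιE.toRingHom rE hstarE γ e he,
        LinearMap.sum_apply]
      exact Finset.sum_congr rfl fun β _ => rfl
    have hRHS : φ.bulletM (fapply rE m) e
        = ∑ β ∈ Finset.Iic E', ∑ w ∈ Finset.Iic E', φ.C (β + w) e • rE β (m w) := by
      show (∑ α ∈ Finset.Iic E', φ.C α e • fapply rE m α) = _
      have step1 : ∀ α ∈ Finset.Iic E', φ.C α e • fapply rE m α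
          = ∑ β ∈ Finset.Iic α, (fun β w => φ.C (β + w) e • rE β (m w)) β (α - β) := by
        intro α _
        show φ.C α e • (∑ β ∈ Finset.Iic α, rE β (m (α - β))) = _
        rw [Finset.smul_sum]
        apply Finset.sum_congr rfl
        intro β hβ
        dsimp only
        rw [add_tsub_cancel_of_le (Finset.mem_Iic.1 hβ)]
      rw [Finset.sum_congr rfl step1,
        sum_Iic_pairs E' (fun β w => φ.C (β + w) e • rE β (m w))]
      apply Finset.sum_congr rfl
      intro β hβ
      symm
      apply sum_box tsub_le_self
      intro w _ hwb
      rw [φ.C_vanish he (wt_add_gt (Finset.mem_Iic.1 hβ) hwb), zero_smul]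
    rw [hLHS, hRHS, Finset.sum_comm]

end HS
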